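/- Let X be a proper metric space, F: X → Y an L-Lipschitz quotient mapping (i.e., B(F(x), r/L) ⊆ F(B(x,r)) ⊆ B(F(x), Lr) for all x and r > 0), and γ: [0,T] → Y a 1-Lipschitz curve with γ(0) = F(x). Then there exists an L-Lipschitz curve γ̃: [0,T] → X with γ̃(0) = x and F ∘ γ̃ = γ. -/

import Mathlib

/-- `F : X → Y` is an `L`-Lipschitz quotient mapping:
`B(F x, r/L) ⊆ F(B(x,r)) ⊆ B(F x, L·r)` for all `x` and `r > 0`. -/
def IsLQ {X Y : Type*} [MetricSpace X] [MetricSpace Y] (L : ℝ) (F : X → Y) : Prop :=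
  ∀ (x : X) (r : ℝ), 0 < r →
    Metric.ball (F x) (r / L) ⊆ F '' Metric.ball x r ∧
    F '' Metric.ball x r ⊆ Metric.ball (F x) (L * r)

lemma lq_dist_le {X Y : Type*} [MetricSpace X] [MetricSpace Y]
    {L : ℝ} (hL : 1 ≤ L) {F : X → Y} (hF : IsLQ L F) (a b : X) :
    dist (F a) (F b) ≤ L * dist a b := by
  have hL0 : (0:ℝ) < L := lt_of_lt_of_le one_pos hL
  refine le_of_forall_pos_le_add (fun ε hε => ?_)
  have hr : (0:ℝ) < dist a b + ε / L := by positivity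
  have hb : b ∈ Metric.ball a (dist a b + ε / L) := by
    rw [Metric.mem_ball, dist_comm]
    linarith [div_pos hε hL0]
  have := (hF a _ hr).2 ⟨b, hb, rfl⟩
  rw [Metric.mem_ball, dist_comm] at this
  have heq : L * (dist a b + ε / L) = L * dist a b + ε := by field_simp
  linarith [this]

lemma chain_dist {X : Type*} [MetricSpace X] (f : ℕ → X) {c : ℝ}
    (h : ∀ k, dist (f (k+1)) (f k) ≤ c) (j m : ℕ) :
    dist (f (j + m)) (f j) ≤ m * c := by
  induction m with
  | zero => simp
  | succ m ih =>
    have h1 := dist_triangle (f (j+m+1)) (f (j+m)) (f j)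
    have h2 := h (j+m)
    have he : j + (m+1) = j + m + 1 := rfl
    rw [he]
    push_cast
    linarith

lemma chain_exists {X Y : Type*} [MetricSpace X] [MetricSpace Y]
    {L : ℝ} (hL : 1 ≤ L) {F : X → Y} (hF : IsLQ L F)
    (x : X) {T : ℝ} (hT : 0 ≤ T) (γ : ℝ → Y)
    (hγ : ∀ s ∈ Set.Icc 0 T, ∀ t ∈ Set.Icc 0 T, dist (γ s) (γ t) ≤ dist s t)
    (hγ0 : γ 0 = F x) {δ : ℝ} (hδ : 0 < δ) :
    ∃ f : ℕ → X, f 0 = x ∧ (∀ k : ℕ, F (f k) = γ (min ((k:ℝ) * δ) T)) ∧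
      ∀ k : ℕ, dist (f (k+1)) (f k) ≤ L * δ * (1 + δ) := by
  have hL0 : (0:ℝ) < L := lt_of_lt_of_le one_pos hL
  have hmem : ∀ k : ℕ, min ((k:ℝ) * δ) T ∈ Set.Icc (0:ℝ) T := fun k =>
    ⟨le_min (by positivity) hT, min_le_right _ _⟩
  have step : ∀ (k : ℕ) (p : X), F p = γ (min ((k:ℝ) * δ) T) →
      ∃ q : X, F q = γ (min (((k+1:ℕ):ℝ) * δ) T) ∧ dist q p ≤ L * δ * (1 + δ) := by
    intro k p hp
    have hr : (0:ℝ) < L * (δ * (1 + δ)) := by positivity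
    have hdiv : L * (δ * (1 + δ)) / L = δ * (1 + δ) := by field_simp
    have hmin : |min (((k+1:ℕ):ℝ) * δ) T - min ((k:ℝ) * δ) T| ≤ δ := by
      push_cast
      rcases le_total (((k:ℝ)+1) * δ) T with h | h
      · rw [min_eq_left h, min_eq_left (by nlinarith : (k:ℝ)*δ ≤ T),
          abs_of_nonneg (by nlinarith)]
        nlinarith
      · rw [min_eq_right h]
        rcases le_total ((k:ℝ)*δ) T with h2 | h2
        · rw [min_eq_left h2, abs_of_nonneg (by nlinarith)]; nlinarith
        · rw [min_eq_right h2]; simpa using hδ.le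
    have hball : γ (min (((k+1:ℕ):ℝ) * δ) T) ∈
        Metric.ball (F p) (L * (δ * (1 + δ)) / L) := by
      rw [hp, hdiv, Metric.mem_ball]
      calc dist (γ (min (((k+1:ℕ):ℝ)*δ) T)) (γ (min ((k:ℝ)*δ) T))
          ≤ dist (min (((k+1:ℕ):ℝ)*δ) T) (min ((k:ℝ)*δ) T) := hγ _ (hmem _) _ (hmem _)
        _ ≤ δ := by rw [Real.dist_eq]; exact hmin
        _ < δ * (1 + δ) := by nlinarith
    obtain ⟨q, hq, hFq⟩ := (hF p _ hr).1 hball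
    exact ⟨q, hFq, by rw [mul_assoc]; exact (Metric.mem_ball.mp hq).le⟩
  choose Q hQF hQd using step
  let g : ∀ k : ℕ, {p : X // F p = γ (min ((k:ℝ) * δ) T)} := fun k =>
    Nat.rec ⟨x, by simp [hγ0, min_eq_left hT]⟩
      (fun k ih => ⟨Q k ih.1 ih.2, hQF k ih.1 ih.2⟩) k
  exact ⟨fun k => (g k).1, rfl, fun k => (g k).2, fun k => hQd k (g k).1 (g k).2⟩


/-- Path lifting for Lipschitz quotient maps on proper spaces. -/
theorem stmt0 {X Y : Type*} [MetricSpace X] [MetricSpace Y] [ProperSpace X]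
    (L : ℝ) (hL : 1 ≤ L) (F : X → Y) (hF : IsLQ L F)
    (x : X) (T : ℝ) (hT : 0 ≤ T) (γ : ℝ → Y)
    (hγ : ∀ s ∈ Set.Icc 0 T, ∀ t ∈ Set.Icc 0 T, dist (γ s) (γ t) ≤ dist s t)
    (hγ0 : γ 0 = F x) :
    ∃ γ' : ℝ → X,
      (∀ s ∈ Set.Icc 0 T, ∀ t ∈ Set.Icc 0 T, dist (γ' s) (γ' t) ≤ L * dist s t) ∧
      γ' 0 = x ∧ ∀ t ∈ Set.Icc 0 T, F (γ' t) = γ t := by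
  classical
  have hL0 : (0:ℝ) < L := lt_of_lt_of_le one_pos hL
  rcases eq_or_lt_of_le hT with rfl | hT0
  · refine ⟨fun _ => x, ?_, rfl, ?_⟩
    · intro s hs t ht
      have : dist s t ≥ 0 := dist_nonneg
      simp only [dist_self]
      positivity
    · intro t ht
      have : t = 0 := le_antisymm ht.2 ht.1
      subst this; simp [hγ0]
  -- main case 0 < T
  set δ : ℕ → ℝ := fun n => T / ((n:ℝ)+1) with hδdef
  have hδpos : ∀ n, 0 < δ n := fun n => by
    have : (0:ℝ) ≤ (n:ℝ) := Nat.cast_nonneg n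
    rw [hδdef]; positivity
  have hδle : ∀ n, δ n ≤ T := fun n => by
    rw [hδdef]
    have h1 : (0:ℝ) ≤ (n:ℝ) := Nat.cast_nonneg n
    rw [div_le_iff₀ (by linarith)]
    nlinarith
  have hδ0 : Filter.Tendsto δ Filter.atTop (nhds 0) := by
    have h := (tendsto_one_div_add_atTop_nhds_zero_nat).const_mul T
    simp only [mul_zero] at h
    convert h using 2 with n
    rw [hδdef]
    field_simp
  choose f hf0 hfF hfd using fun n => chain_exists hL hF x hT γ hγ hγ0 (hδpos n)
  set g : ℕ → ℝ → X := fun n t => f n ⌊t / δ n⌋₊ with hgdef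
  -- key distance estimate
  have key : ∀ n, ∀ s ∈ Set.Icc (0:ℝ) T, ∀ t ∈ Set.Icc (0:ℝ) T, s ≤ t →
      dist (g n t) (g n s) ≤ L * (t - s + δ n) * (1 + δ n) := by
    intro n s hs t ht hst
    have hδn := hδpos n
    set ks := ⌊s / δ n⌋₊ with hks'
    set kt := ⌊t / δ n⌋₊ with hkt'
    have hks : (ks : ℝ) ≤ s / δ n := Nat.floor_le (div_nonneg hs.1 hδn.le)
    have hksu : s / δ n < ks + 1 := Nat.lt_floor_add_one _
    have hkt : (kt : ℝ) ≤ t / δ n := Nat.floor_le (div_nonneg ht.1 hδn.le)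
    have hmono : ks ≤ kt := Nat.floor_mono (by gcongr)
    have hm : dist (f n kt) (f n ks) ≤ ((kt - ks : ℕ):ℝ) * (L * δ n * (1 + δ n)) := by
      have := chain_dist (f n) (hfd n) ks (kt - ks)
      rwa [Nat.add_sub_cancel' hmono] at this
    have hcast : ((kt - ks : ℕ):ℝ) = (kt : ℝ) - (ks : ℝ) := Nat.cast_sub hmono
    have hmb : ((kt:ℝ) - ks) ≤ (t - s)/δ n + 1 := by
      rw [sub_div]; linarith
    have hc0 : (0:ℝ) ≤ L * δ n * (1 + δ n) := by positivity
    have h1 : dist (g n t) (g n s) ≤ ((t - s)/δ n + 1) * (L * δ n * (1 + δ n)) := by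
      rw [hcast] at hm
      exact le_trans hm (mul_le_mul_of_nonneg_right hmb hc0)
    have heq : ((t - s)/δ n + 1) * (L * δ n * (1 + δ n)) = L * (t - s + δ n) * (1 + δ n) := by
      field_simp
    linarith
  -- uniform bound
  set R : ℝ := L * (T + T) * (1 + T) with hRdef
  have h0mem : (0:ℝ) ∈ Set.Icc (0:ℝ) T := ⟨le_refl _, hT⟩
  have hg0 : ∀ n, g n 0 = x := by
    intro n
    show f n ⌊(0:ℝ) / δ n⌋₊ = x
    rw [zero_div, Nat.floor_zero, hf0 n]
  have hball : ∀ n, ∀ t ∈ Set.Icc (0:ℝ) T, g n t ∈ Metric.closedBall x R := by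
    intro n t ht
    have h2 := key n 0 h0mem t ht ht.1
    rw [hg0 n] at h2
    rw [Metric.mem_closedBall]
    have hδn := hδpos n
    have hδT := hδle n
    have ht2 := ht.2
    have ht1 := ht.1
    have e1 : t - 0 + δ n ≤ T + T := by linarith
    have e2 : (1:ℝ) + δ n ≤ 1 + T := by linarith
    have e5 : L * (t - 0 + δ n) * (1 + δ n) ≤ L * (T + T) * (1 + T) :=
      mul_le_mul (mul_le_mul_of_nonneg_left e1 hL0.le) e2 (by linarith) (by positivity)
    rw [hRdef]
    linarith
  -- F values along grid
  have hgF : ∀ n, ∀ t ∈ Set.Icc (0:ℝ) T, dist (F (g n t)) (γ t) ≤ δ n := by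
    intro n t ht
    have hδn := hδpos n
    set kt := ⌊t / δ n⌋₊ with hkt'
    have hkt : (kt : ℝ) ≤ t / δ n := Nat.floor_le (div_nonneg ht.1 hδn.le)
    have h1 : (kt : ℝ) * δ n ≤ t := by
      have := mul_le_mul_of_nonneg_right hkt hδn.le
      rwa [div_mul_cancel₀ _ hδn.ne'] at this
    have h2 : t - δ n < (kt:ℝ) * δ n := by
      have h3 := Nat.lt_floor_add_one (t / δ n)
      have h4 := (div_lt_iff₀ hδn).mp h3
      nlinarith
    have hmemI : (kt:ℝ) * δ n ∈ Set.Icc (0:ℝ) T :=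
      ⟨by positivity, le_trans h1 ht.2⟩
    have hmin : min ((kt:ℝ) * δ n) T = (kt:ℝ) * δ n := min_eq_left hmemI.2
    have hFe : F (g n t) = γ ((kt:ℝ) * δ n) := by
      have := hfF n kt
      rwa [hmin] at this
    rw [hFe]
    refine le_trans (hγ _ hmemI _ ht) ?_
    rw [Real.dist_eq, abs_of_nonpos (by linarith)]
    linarith
  -- ultrafilter limit
  let U : Ultrafilter ℕ := Ultrafilter.of Filter.atTop
  have hU : (U : Filter ℕ) ≤ Filter.atTop := Ultrafilter.of_le _
  have hδ0U : Filter.Tendsto δ (U : Filter ℕ) (nhds 0) := hδ0.mono_left hU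
  have hlim : ∀ t, t ∈ Set.Icc (0:ℝ) T →
      ∃ a, Filter.Tendsto (fun n => g n t) (U : Filter ℕ) (nhds a) := by
    intro t ht
    obtain ⟨a, -, ha⟩ := (isCompact_closedBall x R).ultrafilter_le_nhds
      (U.map (fun n => g n t)) (by
        rw [Filter.le_principal_iff]
        exact Filter.mem_map.mpr (Filter.univ_mem' (fun n => hball n t ht)))
    exact ⟨a, ha⟩
  set γ' : ℝ → X := fun t => if h : t ∈ Set.Icc (0:ℝ) T then (hlim t h).choose else x
    with hγ'def
  have htend : ∀ t, ∀ h : t ∈ Set.Icc (0:ℝ) T,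
      Filter.Tendsto (fun n => g n t) (U : Filter ℕ) (nhds (γ' t)) := by
    intro t h
    have : γ' t = (hlim t h).choose := by rw [hγ'def]; simp only [dif_pos h]
    rw [this]
    exact (hlim t h).choose_spec
  refine ⟨γ', ?_, ?_, ?_⟩
  · -- Lipschitz
    have key2 : ∀ s ∈ Set.Icc (0:ℝ) T, ∀ t ∈ Set.Icc (0:ℝ) T, s ≤ t →
        dist (γ' s) (γ' t) ≤ L * dist s t := by
      intro s hs t ht hst
      have h1 : Filter.Tendsto (fun n => dist (g n s) (g n t)) (U:Filter ℕ)
          (nhds (dist (γ' s) (γ' t))) := (htend s hs).dist (htend t ht)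
      have h2 : Filter.Tendsto (fun n => L * (t - s + δ n) * (1 + δ n)) (U:Filter ℕ)
          (nhds (L * (t - s + 0) * (1 + 0))) :=
        ((tendsto_const_nhds.add hδ0U).const_mul L).mul (tendsto_const_nhds.add hδ0U)
      have h3 : dist (γ' s) (γ' t) ≤ L * (t - s + 0) * (1 + 0) :=
        le_of_tendsto_of_tendsto' h1 h2
          (fun n => by rw [dist_comm]; exact key n s hs t ht hst)
      have h4 : dist s t = t - s := by rw [Real.dist_eq, abs_of_nonpos (by linarith)]; ring
      rw [h4]
      linarith [h3]
    intro s hs t ht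
    rcases le_total s t with h | h
    · exact key2 s hs t ht h
    · rw [dist_comm, dist_comm s t]; exact key2 t ht s hs h
  · -- γ' 0 = x
    have hconst : Filter.Tendsto (fun n => g n 0) (U:Filter ℕ) (nhds x) := by
      have : (fun n => g n 0) = fun _ => x := funext hg0
      rw [this]; exact tendsto_const_nhds
    exact tendsto_nhds_unique (htend 0 h0mem) hconst
  · -- F ∘ γ' = γ
    intro t ht
    have hFc : Continuous F := by
      have hlip : LipschitzWith (Real.toNNReal L) F := by
        apply LipschitzWith.of_dist_le_mul
        intro a b
        rw [Real.coe_toNNReal L hL0.le]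
        exact lq_dist_le hL hF a b
      exact hlip.continuous
    have h1 : Filter.Tendsto (fun n => F (g n t)) (U:Filter ℕ) (nhds (F (γ' t))) :=
      (hFc.tendsto _).comp (htend t ht)
    have h2 : Filter.Tendsto (fun n => F (g n t)) (U:Filter ℕ) (nhds (γ t)) := by
      rw [tendsto_iff_dist_tendsto_zero]
      exact squeeze_zero (fun n => dist_nonneg) (fun n => hgF n t ht) hδ0U
    exact tendsto_nhds_unique h1 h2
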